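/- arXiv:2211.02939 — 2 statements merged into one kernel-verified Lean document; each statement's English description precedes it below -/
import Mathlib

section
/- Suppose nonnegative random quantities E_k := E[L^k(ξ^k) − L^{*,k}] satisfy E[L^{k−1}(ξ^k) − L^{*,k−1}] ≤ (1 − σ/(dL))·(L^{k−1}(ξ^{k−1}) − L^{*,k−1}) for each k, and that |L^k(ξ) − L^{k−1}(ξ)| ≤ e uniformly in ξ and |L^{*,k} − L^{*,k−1}| ≤ e. Then E_k ≤ (1 − σ/(dL))^k · E_0 + 2e·dL/σ for all k, and consequently limsup_{k→∞} E_k ≤ 2e·dL/σ. -/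
open MeasureTheory

/-- Tracking-error bound for a time-varying objective (Theorem 2 of the paper):
under the per-step expected contraction and uniform bounds `e` on the drift of the
objective and of the optimal values, the expected tracking error
`E_k = E[L^k(ξ^k) − L^{*,k}]` converges linearly up to the asymptotic floor
`2 e d L / σ`, and its limsup is bounded by that floor. -/
theorem stmt_7 {Ω : Type*} [MeasurableSpace Ω] (μ : Measure Ω) [IsProbabilityMeasure μ]
    {α : Type*} (ξ : ℕ → Ω → α) (Lf : ℕ → α → ℝ) (Lstar : ℕ → ℝ) (e : ℝ) (he : 0 ≤ e)
    (dim : ℕ) (hdim : 0 < dim) (σ L : ℝ) (hσ : 0 < σ) (hL : 0 < L) (hσdL : σ ≤ dim * L)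
    (hint : ∀ k j, Integrable (fun ω => Lf j (ξ k ω)) μ)
    (hnonneg : ∀ k ω, Lstar k ≤ Lf k (ξ k ω))
    (hrec : ∀ k, (∫ ω, (Lf k (ξ (k + 1) ω) - Lstar k) ∂μ) ≤
      (1 - σ / (dim * L)) * ∫ ω, (Lf k (ξ k ω) - Lstar k) ∂μ)
    (hdrift : ∀ k, ∀ v : α, |Lf (k + 1) v - Lf k v| ≤ e)
    (hstar : ∀ k, |Lstar (k + 1) - Lstar k| ≤ e) :
    (∀ k, (∫ ω, (Lf k (ξ k ω) - Lstar k) ∂μ) ≤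
        (1 - σ / (dim * L)) ^ k * (∫ ω, (Lf 0 (ξ 0 ω) - Lstar 0) ∂μ)
          + 2 * e * (dim * L) / σ) ∧
      Filter.limsup (fun k => ∫ ω, (Lf k (ξ k ω) - Lstar k) ∂μ) Filter.atTop ≤
        2 * e * (dim * L) / σ := by
  set ρ : ℝ := 1 - σ / (dim * L) with hρdef
  set C : ℝ := 2 * e * (dim * L) / σ with hCdef
  set E : ℕ → ℝ := fun k => ∫ ω, (Lf k (ξ k ω) - Lstar k) ∂μ with hEdef
  have hdL : (0:ℝ) < dim * L := by positivity
  have hρ0 : 0 ≤ ρ := by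
    have : σ / (dim * L) ≤ 1 := (div_le_one hdL).mpr hσdL
    simp [hρdef]; linarith
  have hρ1 : ρ < 1 := by
    have : 0 < σ / (dim * L) := div_pos hσ hdL
    simp [hρdef]; linarith
  have hC0 : 0 ≤ C := by positivity
  have hE0 : ∀ k, 0 ≤ E k := fun k =>
    integral_nonneg fun ω => sub_nonneg.mpr (hnonneg k ω)
  have hstep : ∀ k, E (k + 1) ≤ ρ * E k + 2 * e := by
    intro k
    have h1 : E (k + 1) ≤ (∫ ω, (Lf k (ξ (k + 1) ω) - Lstar k) ∂μ) + 2 * e := by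
      have : E (k + 1) ≤ ∫ ω, ((Lf k (ξ (k + 1) ω) - Lstar k) + 2 * e) ∂μ := by
        apply integral_mono ((hint (k+1) (k+1)).sub (integrable_const _))
          (((hint (k+1) k).sub (integrable_const _)).add (integrable_const _))
        intro ω
        have h2 := abs_le.mp (hdrift k (ξ (k + 1) ω))
        have h3 := abs_le.mp (hstar k)
        simp only [Pi.sub_apply, Pi.add_apply]
        linarith [h2.2, h3.1]
      have hadd := integral_add (μ := μ) (f := fun ω => Lf k (ξ (k+1) ω) - Lstar k)
        (g := fun _ => (2:ℝ) * e) ((hint (k+1) k).sub (integrable_const _)) (integrable_const _)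
      rw [hadd] at this
      simpa [measure_univ] using this
    have := hrec k
    linarith
  have hkey : ∀ k, E k ≤ ρ ^ k * E 0 + C := by
    intro k
    induction k with
    | zero => simp; linarith [hC0]
    | succ n ih =>
      have h1 := hstep n
      have h2 : ρ * E n ≤ ρ * (ρ ^ n * E 0 + C) := by
        exact mul_le_mul_of_nonneg_left ih hρ0
      have h3 : ρ * C + 2 * e = C := by
        have hσ' : σ ≠ 0 := ne_of_gt hσ
        have hdL' : (dim : ℝ) * L ≠ 0 := ne_of_gt hdL
        rw [hρdef, hCdef]
        field_simp
        ring
      calc E (n + 1) ≤ ρ * E n + 2 * e := h1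
        _ ≤ ρ * (ρ ^ n * E 0 + C) + 2 * e := by linarith
        _ = ρ ^ (n + 1) * E 0 + (ρ * C + 2 * e) := by ring
        _ = ρ ^ (n + 1) * E 0 + C := by rw [h3]
  refine ⟨hkey, ?_⟩
  have htend : Filter.Tendsto (fun k => ρ ^ k * E 0) Filter.atTop (nhds 0) := by
    have := tendsto_pow_atTop_nhds_zero_of_lt_one hρ0 hρ1
    simpa using this.mul_const (E 0)
  apply le_of_forall_pos_le_add
  intro ε hε
  have hev : ∀ᶠ k in Filter.atTop, E k ≤ C + ε := by
    filter_upwards [htend.eventually (gt_mem_nhds hε)] with k hk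
    have := hkey k
    linarith
  have hcb : Filter.IsCoboundedUnder (· ≤ ·) Filter.atTop E := by
    apply Filter.isCoboundedUnder_le_of_eventually_le Filter.atTop (x := 0)
    filter_upwards with k using hE0 k
  exact Filter.limsup_le_of_le hcb hev
end

section
/- Let f : ℝ^d → ℝ be differentiable with coordinate-wise L-Lipschitz gradient, and let i be chosen uniformly at random from {1,…,d}, with exact coordinate minimization ξ⁺ := ξ + α*·e_i, α* := argmin_α [α∇_i f(ξ) + (L/2)α²] = −∇_i f(ξ)/L (unconstrained case, χ ≡ 0). Then E[f(ξ⁺)] ≤ f(ξ) − (1/(2dL))·‖∇f(ξ)‖². If moreover f satisfies the PL inequality (1/2)‖∇f(ξ)‖² ≥ σ·(f(ξ) − f*), then E[f(ξ⁺)] − f* ≤ (1 − σ/(dL))·(f(ξ) − f*). -/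
lemma descent1d (L : ℝ) (hL : 0 < L) (φ φ' : ℝ → ℝ)
    (hφ : ∀ t, HasDerivAt φ (φ' t) t)
    (hlip : ∀ s t : ℝ, |φ' t - φ' s| ≤ L * |t - s|) (α : ℝ) :
    φ α ≤ φ 0 + α * φ' 0 + L / 2 * α ^ 2 := by
  have hcont : Continuous φ' := by
    rw [Metric.continuous_iff]
    intro s ε hε
    exact ⟨ε / L, by positivity, fun t ht => by
      rw [Real.dist_eq]
      calc |φ' t - φ' s| ≤ L * |t - s| := hlip s t
        _ < L * (ε / L) := by
            have := (Real.dist_eq t s) ▸ ht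
            exact mul_lt_mul_of_pos_left this hL
        _ = ε := by field_simp⟩
  have hint : ∀ a b : ℝ, IntervalIntegrable φ' MeasureTheory.volume a b :=
    fun a b => hcont.intervalIntegrable a b
  have heq : φ α - φ 0 = ∫ t in (0:ℝ)..α, φ' t :=
    (intervalIntegral.integral_eq_sub_of_hasDerivAt (fun t _ => hφ t) (hint 0 α)).symm
  have heq2 : φ α - φ 0 - α * φ' 0 = ∫ t in (0:ℝ)..α, (φ' t - φ' 0) := by
    rw [intervalIntegral.integral_sub (hint 0 α) intervalIntegrable_const,
      intervalIntegral.integral_const, smul_eq_mul, ← heq]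
    ring
  have step1 : |∫ t in (0:ℝ)..α, (φ' t - φ' 0)| ≤ |∫ t in (0:ℝ)..α, abs (φ' t - φ' 0)| := by
    simpa [Real.norm_eq_abs] using
      intervalIntegral.norm_integral_le_abs_integral_norm
        (f := fun t => φ' t - φ' 0) (a := (0:ℝ)) (b := α) (μ := MeasureTheory.volume)
  have step2 : |∫ t in (0:ℝ)..α, abs (φ' t - φ' 0)| ≤ L / 2 * α ^ 2 := by
    rcases le_or_gt 0 α with h | h
    · have hmono : (∫ t in (0:ℝ)..α, abs (φ' t - φ' 0)) ≤ ∫ t in (0:ℝ)..α, L * t := by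
        apply intervalIntegral.integral_mono_on h ((hint 0 α).sub intervalIntegrable_const).abs
          (by apply Continuous.intervalIntegrable; continuity)
        intro t ht
        simpa [abs_of_nonneg ht.1] using hlip 0 t
      have hnn : (0:ℝ) ≤ ∫ t in (0:ℝ)..α, abs (φ' t - φ' 0) :=
        intervalIntegral.integral_nonneg h (fun t _ => abs_nonneg _)
      rw [abs_of_nonneg hnn]
      calc _ ≤ ∫ t in (0:ℝ)..α, L * t := hmono
        _ = L / 2 * α ^ 2 := by
            rw [intervalIntegral.integral_const_mul, integral_id]; ring
    · rw [intervalIntegral.integral_symm α 0, abs_neg]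
      have hmono : (∫ t in α..(0:ℝ), abs (φ' t - φ' 0)) ≤ ∫ t in α..(0:ℝ), L * (-t) := by
        apply intervalIntegral.integral_mono_on h.le
          ((hint α 0).sub intervalIntegrable_const).abs
          (by apply Continuous.intervalIntegrable; continuity)
        intro t ht
        simpa [abs_of_nonpos ht.2] using hlip 0 t
      have hnn : (0:ℝ) ≤ ∫ t in α..(0:ℝ), abs (φ' t - φ' 0) :=
        intervalIntegral.integral_nonneg h.le (fun t _ => abs_nonneg _)
      rw [abs_of_nonneg hnn]
      calc _ ≤ ∫ t in α..(0:ℝ), L * (-t) := hmono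
        _ = L / 2 * α ^ 2 := by
            rw [intervalIntegral.integral_const_mul]
            have : (∫ t in α..(0:ℝ), -t) = α ^ 2 / 2 := by
              rw [intervalIntegral.integral_neg, integral_id]; ring
            rw [this]; ring
  have := heq2 ▸ (step1.trans step2)
  have := abs_le.mp this
  linarith [this.2]

/-- Expected decrease of randomized exact coordinate minimization (unconstrained smooth
case), and linear convergence under the Polyak–Łojasiewicz inequality.  The expectation
over the uniformly random coordinate `i` is written as the average over `i`. -/
theorem stmt_17 (d : ℕ) (hd : 0 < d) (f : (Fin d → ℝ) → ℝ) (hf : Differentiable ℝ f)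
    (L : ℝ) (hL : 0 < L)
    (hLip : ∀ x : Fin d → ℝ, ∀ i : Fin d, ∀ α : ℝ,
      |fderiv ℝ f (Function.update x i (x i + α)) (Pi.single i 1)
          - fderiv ℝ f x (Pi.single i 1)| ≤ L * |α|)
    (ξ : Fin d → ℝ) :
    ((1 / (d : ℝ)) * ∑ i : Fin d,
        f (Function.update ξ i (ξ i - fderiv ℝ f ξ (Pi.single i 1) / L)) ≤
      f ξ - 1 / (2 * d * L) * ∑ i : Fin d, (fderiv ℝ f ξ (Pi.single i 1)) ^ 2) ∧
      ∀ fstar σ : ℝ, 0 < σ → (∀ y, fstar ≤ f y) →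
        (∀ y : Fin d → ℝ,
          σ * (f y - fstar) ≤ 1 / 2 * ∑ i : Fin d, (fderiv ℝ f y (Pi.single i 1)) ^ 2) →
        (1 / (d : ℝ)) * (∑ i : Fin d,
            f (Function.update ξ i (ξ i - fderiv ℝ f ξ (Pi.single i 1) / L))) - fstar ≤
          (1 - σ / (d * L)) * (f ξ - fstar) := by
  have hd' : (0:ℝ) < d := Nat.cast_pos.mpr hd
  set g : Fin d → ℝ := fun i => fderiv ℝ f ξ (Pi.single i 1) with hg
  have hgdef : ∀ i : Fin d, fderiv ℝ f ξ (Pi.single i 1) = g i := fun _ => rfl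
  simp only [hgdef]
  have hupd : ∀ (x : Fin d → ℝ) (i : Fin d) (t : ℝ),
      Function.update x i (x i + t) = x + t • (Pi.single i 1 : Fin d → ℝ) := by
    intro x i t
    funext j
    rcases eq_or_ne j i with h | h
    · subst h; simp
    · simp [Function.update_apply, h, Pi.single_apply]
  -- per-coordinate descent
  have key : ∀ i : Fin d,
      f (Function.update ξ i (ξ i - g i / L)) ≤ f ξ - g i ^ 2 / (2 * L) := by
    intro i
    set e : Fin d → ℝ := Pi.single i 1 with he
    set φ' : ℝ → ℝ := fun t => fderiv ℝ f (ξ + t • e) e with hφ'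
    have hderiv : ∀ t : ℝ, HasDerivAt (fun t : ℝ => f (ξ + t • e)) (φ' t) t := by
      intro t
      have h1 : HasDerivAt (fun t : ℝ => ξ + t • e) e t := by
        simpa using ((hasDerivAt_id t).smul_const e).const_add ξ
      exact (hf (ξ + t • e)).hasFDerivAt.comp_hasDerivAt t h1
    have hlip : ∀ s t : ℝ, |φ' t - φ' s| ≤ L * |t - s| := by
      intro s t
      have h2 := hLip (ξ + s • e) i (t - s)
      have h3 : Function.update (ξ + s • e) i ((ξ + s • e) i + (t - s)) = ξ + t • e := by
        rw [hupd]
        rw [add_assoc, ← add_smul]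
        ring_nf
      rw [h3] at h2
      simpa [hφ', he] using h2
    have hmain := descent1d L hL _ φ' hderiv hlip (-(g i / L))
    have h0 : f (ξ + (0:ℝ) • e) = f ξ := by simp
    have h0' : φ' 0 = g i := by simp [hφ', he, hg]
    have hupd2 : Function.update ξ i (ξ i - g i / L) = ξ + (-(g i / L)) • e := by
      rw [sub_eq_add_neg, hupd]
    rw [hupd2]
    have := hmain
    rw [h0, h0'] at this
    calc f (ξ + (-(g i / L)) • e) ≤ f ξ + -(g i / L) * g i + L / 2 * (-(g i / L)) ^ 2 := this
      _ = f ξ - g i ^ 2 / (2 * L) := by field_simp; ring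
  -- summed form
  have hsum : (∑ i : Fin d, f (Function.update ξ i (ξ i - g i / L))) ≤
      (d : ℝ) * f ξ - (∑ i : Fin d, g i ^ 2) / (2 * L) := by
    calc (∑ i : Fin d, f (Function.update ξ i (ξ i - g i / L)))
        ≤ ∑ i : Fin d, (f ξ - g i ^ 2 / (2 * L)) :=
          Finset.sum_le_sum fun i _ => key i
      _ = (d : ℝ) * f ξ - (∑ i : Fin d, g i ^ 2) / (2 * L) := by
          rw [Finset.sum_sub_distrib, Finset.sum_const, Finset.card_univ, Fintype.card_fin,
            nsmul_eq_mul, ← Finset.sum_div]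
  have part1 : (1 / (d : ℝ)) * ∑ i : Fin d, f (Function.update ξ i (ξ i - g i / L)) ≤
      f ξ - 1 / (2 * d * L) * ∑ i : Fin d, g i ^ 2 := by
    have h4 : (1 / (d : ℝ)) * ∑ i : Fin d, f (Function.update ξ i (ξ i - g i / L)) ≤
        (1 / (d : ℝ)) * ((d : ℝ) * f ξ - (∑ i : Fin d, g i ^ 2) / (2 * L)) :=
      mul_le_mul_of_nonneg_left hsum (by positivity)
    calc _ ≤ (1 / (d : ℝ)) * ((d : ℝ) * f ξ - (∑ i : Fin d, g i ^ 2) / (2 * L)) := h4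
      _ = f ξ - 1 / (2 * d * L) * ∑ i : Fin d, g i ^ 2 := by field_simp
  refine ⟨part1, ?_⟩
  intro fstar σ hσ hflb hPL
  have hPLξ := hPL ξ
  simp only [hgdef] at hPLξ
  have hdL : (0:ℝ) < (d : ℝ) * L := by positivity
  have h5 : σ / ((d:ℝ) * L) * (f ξ - fstar) ≤ 1 / (2 * d * L) * ∑ i : Fin d, g i ^ 2 := by
    have := mul_le_mul_of_nonneg_left hPLξ (le_of_lt (one_div_pos.mpr hdL))
    calc σ / ((d:ℝ) * L) * (f ξ - fstar) = 1 / ((d:ℝ) * L) * (σ * (f ξ - fstar)) := by ring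
      _ ≤ 1 / ((d:ℝ) * L) * (1 / 2 * ∑ i : Fin d, g i ^ 2) := this
      _ = 1 / (2 * d * L) * ∑ i : Fin d, g i ^ 2 := by ring
  have : (1 / (d : ℝ)) * (∑ i : Fin d, f (Function.update ξ i (ξ i - g i / L))) - fstar ≤
      f ξ - fstar - σ / ((d:ℝ) * L) * (f ξ - fstar) := by linarith
  calc _ ≤ f ξ - fstar - σ / ((d:ℝ) * L) * (f ξ - fstar) := this
    _ = (1 - σ / ((d:ℝ) * L)) * (f ξ - fstar) := by ring
end
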